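/- Let $d \geq 2$, $k \geq 1$. For a configuration $\omega$ on $\mathbb{T}_{d,k}$ and $A \subseteq V$ satisfying the containment condition (there is $w$ with $A \subseteq \{w \cdot x : |x| \leq k\}$), let $\pi(A)$ be the short-edge cluster of $A$, $\sigma(A)$ the set of hubs, and for each hub $e$ let $S(A,e)$ be the set of endpoints $v'$ of open long edges $\langle u', v' \rangle$ with $u' \in \pi(A)$ and $e \in \text{trace}(\langle u',v' \rangle)$. Then the full cluster $\Pi(A)$ (vertices reachable from $A$ using all open edges) equals the disjoint union of $\pi(A)$ and the sets $\Pi(S(A,e))$ over $e \in \sigma(A)$. -/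

import Mathlib

/-- The progeny of a vertex `u`: all lists with prefix `u`. -/
def prog {d : ℕ} (u : List (Fin d)) : Set (List (Fin d)) := {v | u <+: v}

/-- One step along an open short edge of the configuration `ω = (ωs, ωl)`. -/
def shortStep {d : ℕ} (ωs : List (Fin d) → Fin d → Bool) (u v : List (Fin d)) : Prop :=
  ∃ a : Fin d, v = u ++ [a] ∧ ωs u a = true

/-- One step along an open (short or long) edge. -/
def step {d k : ℕ} (ωs : List (Fin d) → Fin d → Bool)
    (ωl : List (Fin d) → (Fin k → Fin d) → Bool) (u v : List (Fin d)) : Prop :=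
  shortStep ωs u v ∨ ∃ r : Fin k → Fin d, v = u ++ List.ofFn r ∧ ωl u r = true

/-- `π(A)`: the cluster of `A` using only open short edges. -/
def piCl {d : ℕ} (ωs : List (Fin d) → Fin d → Bool) (A : Set (List (Fin d))) :
    Set (List (Fin d)) :=
  {v | ∃ u ∈ A, Relation.ReflTransGen (shortStep ωs) u v}

/-- `Π(A)`: the cluster of `A` using all open edges, short and long. -/
def PiCl {d k : ℕ} (ωs : List (Fin d) → Fin d → Bool)
    (ωl : List (Fin d) → (Fin k → Fin d) → Bool) (A : Set (List (Fin d))) :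
    Set (List (Fin d)) :=
  {v | ∃ u ∈ A, Relation.ReflTransGen (step ωs ωl) u v}

/-- The short edge `⟨u, u·a⟩` is a hub for `A`. -/
def IsHub {d : ℕ} (ωs : List (Fin d) → Fin d → Bool) (A : Set (List (Fin d)))
    (u : List (Fin d)) (a : Fin d) : Prop :=
  prog (u ++ [a]) ∩ piCl ωs A = ∅ ∧ (prog u ∩ piCl ωs A).Nonempty

/-- The short edge `⟨x, x·a⟩` belongs to the trace of the long edge `⟨u', u'·r⟩`. -/
def TraceMem {d k : ℕ} (x : List (Fin d)) (a : Fin d)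
    (u' : List (Fin d)) (r : Fin k → Fin d) : Prop :=
  ∃ i : Fin k, x = u' ++ (List.ofFn r).take (i : ℕ) ∧ a = r i

/-- `S(A,e)` for a hub `e = ⟨x, x·a⟩`: endpoints of open long edges starting in `π(A)`
whose trace passes through `e`. -/
def exitSet {d k : ℕ} (ωs : List (Fin d) → Fin d → Bool)
    (ωl : List (Fin d) → (Fin k → Fin d) → Bool)
    (A : Set (List (Fin d))) (e : List (Fin d) × Fin d) : Set (List (Fin d)) :=
  {v | ∃ u' : List (Fin d), ∃ r : Fin k → Fin d,
    u' ∈ piCl ωs A ∧ ωl u' r = true ∧ TraceMem e.1 e.2 u' r ∧ v = u' ++ List.ofFn r}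

section Aux

variable {d k : ℕ} {ωs : List (Fin d) → Fin d → Bool}
  {ωl : List (Fin d) → (Fin k → Fin d) → Bool} {A : Set (List (Fin d))}

lemma shortStep_prefix {u v : List (Fin d)} (h : shortStep ωs u v) : u <+: v := by
  obtain ⟨a, rfl, -⟩ := h; exact ⟨[a], rfl⟩
lemma step_prefix {u v : List (Fin d)} (h : step ωs ωl u v) : u <+: v := by
  rcases h with h | ⟨r, rfl, -⟩
  · exact shortStep_prefix h
  · exact ⟨_, rfl⟩
lemma rtgShort_prefix {u v : List (Fin d)}
    (h : Relation.ReflTransGen (shortStep ωs) u v) : u <+: v := by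
  induction h with
  | refl => exact List.prefix_rfl
  | tail _ hs ih => exact ih.trans (shortStep_prefix hs)
lemma rtgStep_prefix {u v : List (Fin d)}
    (h : Relation.ReflTransGen (step ωs ωl) u v) : u <+: v := by
  induction h with
  | refl => exact List.prefix_rfl
  | tail _ hs ih => exact ih.trans (step_prefix hs)
lemma short_reach_of_prefix {u v z : List (Fin d)}
    (h : Relation.ReflTransGen (shortStep ωs) u z) (huv : u <+: v) (hvz : v <+: z) :
    Relation.ReflTransGen (shortStep ωs) u v := by
  induction h with
  | refl =>
      have : v = u := hvz.sublist.eq_of_length_le huv.length_le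
      subst this; exact .refl
  | @tail z' z hz' hs ih =>
      obtain ⟨a, rfl, ha⟩ := hs
      rcases Nat.lt_or_ge z'.length v.length with hlt | hge
      · have hv : v = z' ++ [a] := by
          refine hvz.sublist.eq_of_length_le ?_
          simpa using hlt
        subst hv
        exact hz'.tail ⟨a, rfl, ha⟩
      · exact ih (List.prefix_of_prefix_length_le hvz (List.prefix_append _ _) (by simpa using hge))
lemma mem_piCl_of_prefix {v z : List (Fin d)} (hz : z ∈ piCl ωs A) (hvz : v <+: z)
    (hlen : ∀ u ∈ A, u.length ≤ v.length) : v ∈ piCl ωs A := by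
  obtain ⟨u0, hu0, hpath⟩ := hz
  have hu0v : u0 <+: v :=
    List.prefix_of_prefix_length_le (rtgShort_prefix hpath) hvz (hlen u0 hu0)
  exact ⟨u0, hu0, short_reach_of_prefix hpath hu0v hvz⟩
lemma exists_boundary (P : ℕ → Prop) (n : ℕ) (h0 : P 0) (hn : ¬ P n) :
    ∃ i, i < n ∧ P i ∧ ¬ P (i + 1) := by
  induction n with
  | zero => exact absurd h0 hn
  | succ m ih =>
      by_cases hm : P m
      · exact ⟨m, Nat.lt_succ_self m, hm, hn⟩
      · obtain ⟨i, hi, h1, h2⟩ := ih hm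
        exact ⟨i, hi.trans (Nat.lt_succ_self m), h1, h2⟩

/-- If the endpoint of an open long edge out of `π(A)` is not in `π(A)`,
its trace contains a hub. -/
lemma hub_exists {w : List (Fin d)}
    (hA : ∀ v ∈ A, ∃ x : List (Fin d), v = w ++ x ∧ x.length ≤ k)
    {v' : List (Fin d)} {r : Fin k → Fin d}
    (hv' : v' ∈ piCl ωs A) (hnv : v' ++ List.ofFn r ∉ piCl ωs A) :
    ∃ i : Fin k, IsHub ωs A (v' ++ (List.ofFn r).take (i : ℕ)) (r i) := by
  set P : ℕ → Prop := fun i => (prog (v' ++ (List.ofFn r).take i) ∩ piCl ωs A).Nonempty with hP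
  have h0 : P 0 := ⟨v', by
    simp only [List.take_zero, List.append_nil]
    exact ⟨List.prefix_rfl, hv'⟩⟩
  have hwv' : w.length ≤ v'.length := by
    obtain ⟨u1, hu1, hpath⟩ := hv'
    obtain ⟨x1, rfl, -⟩ := hA u1 hu1
    have := (rtgShort_prefix hpath).length_le
    simp only [List.length_append] at this
    omega
  have hlen : ∀ u ∈ A, u.length ≤ (v' ++ List.ofFn r).length := by
    intro u hu
    obtain ⟨x, rfl, hx⟩ := hA u hu
    simp only [List.length_append, List.length_ofFn]
    omega
  have hk' : ¬ P k := by
    rintro ⟨z, hz1, hz2⟩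
    apply hnv
    refine mem_piCl_of_prefix hz2 ?_ hlen
    simpa [prog, List.take_of_length_le (le_of_eq (List.length_ofFn (f := r)))] using hz1
  obtain ⟨i, hik, h1, h2⟩ := exists_boundary P k h0 hk'
  refine ⟨⟨i, hik⟩, ?_, h1⟩
  rw [Set.eq_empty_iff_forall_notMem]
  intro z hz
  apply h2
  refine ⟨z, ?_, hz.2⟩
  have heq : (v' ++ (List.ofFn r).take i) ++ [r ⟨i, hik⟩] = v' ++ (List.ofFn r).take (i + 1) := by
    rw [List.append_assoc]
    congr 1
    have hilt : i < (List.ofFn r).length := by simpa [List.length_ofFn] using hik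
    have : (List.ofFn r)[i]'hilt = r ⟨i, hik⟩ := by
      simp [List.getElem_ofFn]
    rw [← this, List.take_concat_get' _ _ hilt]
  have := hz.1
  simp only [prog, Set.mem_setOf_eq] at this ⊢
  rw [← heq] at *
  exact this

/-- Everything in `Π(S(A,e))` lies in the progeny of the far endpoint of the hub. -/
lemma PiCl_exitSet_prefix {e : List (Fin d) × Fin d} {z : List (Fin d)}
    (hz : z ∈ PiCl ωs ωl (exitSet ωs ωl A e)) : e.1 ++ [e.2] <+: z := by
  obtain ⟨v, hv, hpath⟩ := hz
  obtain ⟨u', r, -, -, ⟨i, hx, ha⟩, rfl⟩ := hv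
  refine List.IsPrefix.trans ?_ (rtgStep_prefix hpath)
  rw [hx, ha, List.append_assoc]
  refine ⟨(List.ofFn r).drop (i + 1), ?_⟩
  rw [List.append_assoc]
  congr 1
  have hilt : (i : ℕ) < (List.ofFn r).length := by simpa [List.length_ofFn] using i.2
  have hget : (List.ofFn r)[(i : ℕ)]'hilt = r i := by simp [List.getElem_ofFn]
  rw [← hget, List.take_concat_get' _ _ hilt, List.take_append_drop]

/-- Two comparable hubs are equal. -/
lemma hub_eq {e e' : List (Fin d) × Fin d} (he : IsHub ωs A e.1 e.2)
    (he' : IsHub ωs A e'.1 e'.2) (h : e.1 ++ [e.2] <+: e'.1 ++ [e'.2]) : e = e' := by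
  rcases Nat.lt_or_ge (e.1 ++ [e.2]).length (e'.1 ++ [e'.2]).length with hlt | hge
  · exfalso
    have h1 : e.1 ++ [e.2] <+: e'.1 := by
      refine List.prefix_of_prefix_length_le h (List.prefix_append _ _) ?_
      simp only [List.length_append, List.length_singleton] at hlt ⊢
      omega
    obtain ⟨z, hz1, hz2⟩ := he'.2
    have : z ∈ prog (e.1 ++ [e.2]) ∩ piCl ωs A := ⟨h1.trans hz1, hz2⟩
    rw [he.1] at this
    exact this
  · have heq : e.1 ++ [e.2] = e'.1 ++ [e'.2] := h.sublist.eq_of_length_le hge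
    have := List.append_inj' heq rfl
    exact Prod.ext this.1 (by simpa using this.2)

lemma piCl_subset_PiCl : piCl ωs A ⊆ PiCl ωs ωl A := by
  rintro v ⟨u, hu, hpath⟩
  exact ⟨u, hu, Relation.ReflTransGen.mono (fun _ _ h => Or.inl h) _ _ hpath⟩

lemma PiCl_tail {B : Set (List (Fin d))} {u v : List (Fin d)}
    (hu : u ∈ PiCl ωs ωl B) (h : step ωs ωl u v) : v ∈ PiCl ωs ωl B := by
  obtain ⟨u0, hu0, hpath⟩ := hu
  exact ⟨u0, hu0, hpath.tail h⟩

end Aux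

/-- Under the containment condition on `A`, the full cluster `Π(A)`
is the disjoint union of `π(A)` and the clusters `Π(S(A,e))` over the hubs `e` of `A`. -/
theorem stmt15 (d k : ℕ) (hd : 2 ≤ d) (hk : 1 ≤ k)
    (ωs : List (Fin d) → Fin d → Bool)
    (ωl : List (Fin d) → (Fin k → Fin d) → Bool)
    (A : Set (List (Fin d)))
    (w : List (Fin d)) (hA : ∀ v ∈ A, ∃ x : List (Fin d), v = w ++ x ∧ x.length ≤ k) :
    PiCl ωs ωl A =
      piCl ωs A ∪ (⋃ e ∈ {e : List (Fin d) × Fin d | IsHub ωs A e.1 e.2},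
        PiCl ωs ωl (exitSet ωs ωl A e)) ∧
    (∀ e ∈ {e : List (Fin d) × Fin d | IsHub ωs A e.1 e.2},
      Disjoint (piCl ωs A) (PiCl ωs ωl (exitSet ωs ωl A e))) ∧
    (∀ e ∈ {e : List (Fin d) × Fin d | IsHub ωs A e.1 e.2},
      ∀ e' ∈ {e : List (Fin d) × Fin d | IsHub ωs A e.1 e.2}, e ≠ e' →
        Disjoint (PiCl ωs ωl (exitSet ωs ωl A e)) (PiCl ωs ωl (exitSet ωs ωl A e'))) := by
  refine ⟨?_, ?_, ?_⟩
  · apply Set.Subset.antisymm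
    · -- ⊆ : induction on the path
      rintro z ⟨u, hu, hpath⟩
      induction hpath with
      | refl => exact Or.inl ⟨u, hu, .refl⟩
      | @tail v' v hpath' hs ih =>
          rcases ih with hv' | hv'
          · rcases hs with hss | ⟨r, rfl, hr⟩
            · -- short step stays in piCl
              obtain ⟨u0, hu0, hp0⟩ := hv'
              exact Or.inl ⟨u0, hu0, hp0.tail hss⟩
            · by_cases hmem : v' ++ List.ofFn r ∈ piCl ωs A
              · exact Or.inl hmem
              · obtain ⟨i, hhub⟩ := hub_exists hA hv' hmem
                refine Or.inr ?_
                have hhub' : ((v' ++ (List.ofFn r).take (i : ℕ), r i) : List (Fin d) × Fin d)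
                    ∈ {e : List (Fin d) × Fin d | IsHub ωs A e.1 e.2} := hhub
                refine Set.mem_biUnion hhub' ?_
                exact ⟨v' ++ List.ofFn r,
                  ⟨v', r, hv', hr, ⟨i, rfl, rfl⟩, rfl⟩, .refl⟩
          · obtain ⟨e, he, hmem⟩ := Set.mem_iUnion₂.mp hv'
            exact Or.inr (Set.mem_biUnion he (PiCl_tail hmem hs))
    · -- ⊇
      apply Set.union_subset
      · exact piCl_subset_PiCl
      · refine Set.iUnion₂_subset fun e he => ?_
        rintro z ⟨v, ⟨u', r, hu', hr, -, rfl⟩, hpath⟩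
        obtain ⟨u0, hu0, hp0⟩ := hu'
        refine ⟨u0, hu0, ?_⟩
        have h1 : Relation.ReflTransGen (step ωs ωl) u0 u' :=
          Relation.ReflTransGen.mono (fun _ _ h => Or.inl h) _ _ hp0
        exact (h1.tail (Or.inr ⟨r, rfl, hr⟩)).trans hpath
  · intro e he
    rw [Set.disjoint_right]
    intro z hz hz'
    have hpre : e.1 ++ [e.2] <+: z := PiCl_exitSet_prefix hz
    have : z ∈ prog (e.1 ++ [e.2]) ∩ piCl ωs A := ⟨hpre, hz'⟩
    rw [he.1] at this
    exact this
  · intro e he e' he' hne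
    rw [Set.disjoint_left]
    intro z hz hz'
    have h1 : e.1 ++ [e.2] <+: z := PiCl_exitSet_prefix hz
    have h2 : e'.1 ++ [e'.2] <+: z := PiCl_exitSet_prefix hz'
    rcases List.prefix_or_prefix_of_prefix h1 h2 with h | h
    · exact hne (hub_eq he he' h)
    · exact hne (hub_eq he' he h).symm
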